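/- Let xs < xt be integers, C ≥ 0 a real number, and f : ℤ → ℝ a function satisfying the Ameso(C) condition on [xs,xt]. Suppose there exist x0 ∈ [xs,xt] and a positive integer b with x0 + b ≤ xt such that (a) f(x0) = min over y ∈ [x0, x0+b] of f(y), and (b) f(x0) + C ≤ max over y ∈ [x0, x0+b] of f(y). Then f(x0) = min over y ∈ [x0, xt] of f(y). -/
import Mathlib


/-- Ceiling of `(x+y)/2` as a rational. -/
def mceil (x y : ℤ) : ℤ := ⌈((x : ℚ) + (y : ℚ)) / 2⌉

/-- Floor of `(x+y)/2` as a rational. -/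
def mfloor (x y : ℤ) : ℤ := ⌊((x : ℚ) + (y : ℚ)) / 2⌋

lemma mid_eq_of_sum {x y m : ℤ} (h : x + y = 2 * m) :
    mceil x y = m ∧ mfloor x y = m := by
  have hq : ((x : ℚ) + (y : ℚ)) / 2 = (m : ℚ) := by
    have hx : ((x : ℚ) + (y : ℚ)) = 2 * (m : ℚ) := by exact_mod_cast h
    rw [hx]; ring
  refine ⟨?_, ?_⟩
  · rw [mceil, hq]; exact Int.ceil_intCast m
  · rw [mfloor, hq]; exact Int.floor_intCast m

/-- Lemma 3 (narrowing to the right): if `f(x0)` is the minimum of `f` on `[x0, x0+b]`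
and `f(x0) + C ≤ max_{[x0, x0+b]} f`, then `f(x0)` is the minimum of `f` on `[x0, xt]`. -/
theorem ameso_narrow_right
    (xs xt : ℤ) (hxst : xs < xt) (C : ℝ) (hC : 0 ≤ C) (f : ℤ → ℝ)
    (hAmeso : ∀ x ∈ Finset.Icc xs xt, ∀ y ∈ Finset.Icc xs xt,
      f x + f y + C ≥ f (mceil x y) + f (mfloor x y))
    (x0 : ℤ) (hx0l : xs ≤ x0) (hx0r : x0 ≤ xt)
    (b : ℤ) (hb : 0 < b) (hbt : x0 + b ≤ xt)
    (hmin : f x0 = (Finset.Icc x0 (x0 + b)).inf' (Finset.nonempty_Icc.2 (by omega)) f)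
    (hmax : f x0 + C ≤ (Finset.Icc x0 (x0 + b)).sup' (Finset.nonempty_Icc.2 (by omega)) f) :
    f x0 = (Finset.Icc x0 xt).inf' (Finset.nonempty_Icc.2 (by omega)) f := by
  have key : ∀ z ∈ Finset.Icc x0 xt, f x0 ≤ f z := by
    by_contra hcon
    push_neg at hcon
    obtain ⟨z0, hz0m, hz0⟩ := hcon
    set S := (Finset.Icc x0 xt).filter (fun y => f y < f x0) with hSdef
    have hSne : S.Nonempty := ⟨z0, Finset.mem_filter.2 ⟨hz0m, hz0⟩⟩
    set z := S.min' hSne with hzdef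
    obtain ⟨hzIcc, hzlt⟩ := Finset.mem_filter.1 (S.min'_mem hSne)
    rw [← hzdef] at hzIcc hzlt
    obtain ⟨hzl, hzr⟩ := Finset.mem_Icc.1 hzIcc
    -- any point of the window has value ≥ f x0
    have hwin : ∀ y ∈ Finset.Icc x0 (x0 + b), f x0 ≤ f y := by
      intro y hy
      rw [hmin]
      exact Finset.inf'_le f hy
    -- z is beyond the window
    have hzb : x0 + b < z := by
      by_contra h
      push_neg at h
      exact absurd (hwin z (Finset.mem_Icc.2 ⟨hzl, h⟩)) (not_le.2 hzlt)
    -- all points strictly before z are ≥ f x0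
    have hreg : ∀ y ∈ Finset.Icc x0 (z - 1), f x0 ≤ f y := by
      intro y hy
      obtain ⟨h1, h2⟩ := Finset.mem_Icc.1 hy
      by_contra h
      push_neg at h
      have hyS : y ∈ S := Finset.mem_filter.2 ⟨Finset.mem_Icc.2 ⟨h1, by omega⟩, h⟩
      have := S.min'_le y hyS
      omega
    have hRne : (Finset.Icc x0 (z - 1)).Nonempty := Finset.nonempty_Icc.2 (by omega)
    set M := (Finset.Icc x0 (z - 1)).sup' hRne f with hMdef
    have hMge : f x0 + C ≤ M := by
      refine le_trans hmax ?_
      exact Finset.sup'_mono f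
        (Finset.Icc_subset_Icc le_rfl (by omega : x0 + b ≤ z - 1))
        (Finset.nonempty_Icc.2 (by omega))
    set T := (Finset.Icc x0 (z - 1)).filter (fun y => f y = M) with hTdef
    have hTne : T.Nonempty := by
      obtain ⟨c, hc, hc2⟩ := Finset.exists_mem_eq_sup' hRne f
      exact ⟨c, Finset.mem_filter.2 ⟨hc, hc2.symm⟩⟩
    set m := T.max' hTne with hmdef
    obtain ⟨hmR, hmM⟩ := Finset.mem_filter.1 (T.max'_mem hTne)
    rw [← hmdef] at hmR hmM
    obtain ⟨hml, hmr⟩ := Finset.mem_Icc.1 hmR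
    -- the rightmost argmax m is > x0
    have hmx0 : x0 < m := by
      rcases lt_or_ge x0 m with h | h
      · exact h
      · have hmeq : m = x0 := le_antisymm h hml
        have hMeq : M = f x0 := by rw [← hmM, hmeq]
        have hz1R : z - 1 ∈ Finset.Icc x0 (z - 1) :=
          Finset.mem_Icc.2 ⟨by omega, le_rfl⟩
        have h1 : f (z - 1) ≤ M := Finset.le_sup' f hz1R
        have h2 : f x0 ≤ f (z - 1) := hreg _ hz1R
        have h3 : f (z - 1) = M := le_antisymm h1 (by rw [hMeq]; exact h2)
        have h4 : z - 1 ≤ m :=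
          T.le_max' _ (Finset.mem_filter.2 ⟨hz1R, h3⟩)
        omega
    rcases le_or_gt (x0 + z) (2 * m) with hcase | hcase
    · -- Case A : reflect z about m
      have huR : 2 * m - z ∈ Finset.Icc x0 (z - 1) :=
        Finset.mem_Icc.2 ⟨by omega, by omega⟩
      have huI : 2 * m - z ∈ Finset.Icc xs xt :=
        Finset.mem_Icc.2 ⟨by omega, by omega⟩
      have hzI : z ∈ Finset.Icc xs xt := Finset.mem_Icc.2 ⟨by omega, by omega⟩
      have hmid := mid_eq_of_sum (show (2 * m - z) + z = 2 * m by ring)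
      have hA := hAmeso (2 * m - z) huI z hzI
      rw [hmid.1, hmid.2] at hA
      have hfu : f (2 * m - z) ≤ M := Finset.le_sup' f huR
      have : f x0 ≤ f z := by
        rw [hMdef] at hfu hMge
        rw [hMdef] at hmM
        linarith [hA, hfu, hMge, hmM]
      linarith [hzlt]
    · -- Case B : reflect x0 about m
      have hvR : 2 * m - x0 ∈ Finset.Icc x0 (z - 1) :=
        Finset.mem_Icc.2 ⟨by omega, by omega⟩
      have hvI : 2 * m - x0 ∈ Finset.Icc xs xt :=
        Finset.mem_Icc.2 ⟨by omega, by omega⟩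
      have hx0I : x0 ∈ Finset.Icc xs xt := Finset.mem_Icc.2 ⟨hx0l, hx0r⟩
      have hmid := mid_eq_of_sum (show x0 + (2 * m - x0) = 2 * m by ring)
      have hA := hAmeso x0 hx0I (2 * m - x0) hvI
      rw [hmid.1, hmid.2] at hA
      have hfv : f (2 * m - x0) ≤ M := Finset.le_sup' f hvR
      have hfvM : f (2 * m - x0) = M := le_antisymm hfv (by linarith [hA, hMge, hmM])
      have h5 : 2 * m - x0 ≤ m :=
        T.le_max' _ (Finset.mem_filter.2 ⟨hvR, hfvM⟩)
      omega
  refine le_antisymm ?_ ?_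
  · exact Finset.le_inf' _ _ key
  · exact Finset.inf'_le f (Finset.mem_Icc.2 ⟨le_rfl, hx0r⟩)
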